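/- Every almost uniformly continuous function between metric spaces is CC-regular, i.e., maps cofinally Cauchy sequences to cofinally Cauchy sequences. -/

import Mathlib

open Metric Filter

/-- A sequence is cofinally Cauchy if for every ε>0 there is an infinite index set
on which all pairwise distances are < ε. -/
def CofinallyCauchy {X : Type*} [MetricSpace X] (x : ℕ → X) : Prop :=
  ∀ ε > 0, ∃ N : Set ℕ, N.Infinite ∧ ∀ n ∈ N, ∀ j ∈ N, dist (x n) (x j) < ε

/-- A function is almost bounded if for every ε>0 there is δ>0 such that the image of
every set of diameter < δ is contained in a finite union of open ε-balls. -/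
def AlmostBounded {X Y : Type*} [MetricSpace X] [MetricSpace Y] (f : X → Y) : Prop :=
  ∀ ε > 0, ∃ δ > 0, ∀ A : Set X, EMetric.diam A < ENNReal.ofReal δ →
    ∃ B : Finset Y, f '' A ⊆ ⋃ b ∈ B, Metric.ball b ε

/-- A metric space is cofinally complete if every cofinally Cauchy sequence clusters. -/
def CofinallyComplete (X : Type*) [MetricSpace X] : Prop :=
  ∀ x : ℕ → X, CofinallyCauchy x → ∃ p : X, MapClusterPt p atTop x

/-- The local total boundedness functional. -/
noncomputable def tFun {X : Type*} [MetricSpace X] (x : X) : ℝ :=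
  sSup {ε : ℝ | 0 < ε ∧ TotallyBounded (Metric.ball x ε)}

/-- Every almost uniformly continuous function is CC-regular. -/
theorem almostUniformlyContinuous_ccRegular {X Y : Type*} [MetricSpace X] [MetricSpace Y]
    (f : X → Y) (hc : Continuous f) (hb : AlmostBounded f)
    (x : ℕ → X) (hx : CofinallyCauchy x) :
    CofinallyCauchy (fun n => f (x n)) := by
  intro ε hε
  obtain ⟨δ, hδ, hδ'⟩ := hb (ε/2) (by linarith)
  obtain ⟨N, hNinf, hN⟩ := hx (δ/2) (by linarith)
  have hdiam : EMetric.diam (x '' N) < ENNReal.ofReal δ := by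
    calc EMetric.diam (x '' N) ≤ ENNReal.ofReal (δ/2) := by
          apply EMetric.diam_le
          rintro a ⟨n, hn, rfl⟩ b ⟨j, hj, rfl⟩
          rw [edist_dist]
          exact ENNReal.ofReal_le_ofReal (hN n hn j hj).le
      _ < ENNReal.ofReal δ := (ENNReal.ofReal_lt_ofReal_iff hδ).mpr (by linarith)
  obtain ⟨B, hB⟩ := hδ' (x '' N) hdiam
  have hpig : ∃ b ∈ B, {n | n ∈ N ∧ f (x n) ∈ ball b (ε/2)}.Infinite := by
    by_contra h
    push_neg at h
    have hsub : N ⊆ ⋃ b ∈ B, {n | n ∈ N ∧ f (x n) ∈ ball b (ε/2)} := by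
      intro n hn
      have : f (x n) ∈ ⋃ b ∈ B, ball b (ε/2) := hB ⟨x n, ⟨n, hn, rfl⟩, rfl⟩
      simp only [Set.mem_iUnion] at this ⊢
      obtain ⟨b, hb1, hb2⟩ := this
      exact ⟨b, hb1, hn, hb2⟩
    exact hNinf ((Set.Finite.biUnion B.finite_toSet
      (fun b hb => h b hb)).subset hsub)
  obtain ⟨b, hbB, hinf⟩ := hpig
  refine ⟨_, hinf, ?_⟩
  rintro n ⟨_, hn'⟩ j ⟨_, hj'⟩
  have := dist_triangle (f (x n)) b (f (x j))
  rw [dist_comm (f (x n)) b] at this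
  rw [mem_ball, dist_comm] at hn' hj'
  simp only []
  linarith [hn', hj']
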